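/- For the Freund submanifold F₂ (α₁=α₂=a, β₁=β₂=b), the density f(x,y)=ab·e^{-by-(2a-b)x} on 0<x<y and ab·e^{-bx-(2a-b)y} on 0<y<x has Cov(X,Y) = (1/4)(1/a² − 1/b²); in particular the covariance is zero if and only if a=b. -/

import Mathlib

open MeasureTheory Real

/-- Density of the Freund submanifold `F₂` (`α₁ = α₂ = a`, `β₁ = β₂ = b`). -/
noncomputable def freundF2 (a b : ℝ) (x y : ℝ) : ℝ :=
  if 0 < x ∧ x < y then a * b * Real.exp (-b * y - (2 * a - b) * x)
  else if 0 < y ∧ y < x then a * b * Real.exp (-b * x - (2 * a - b) * y)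
  else 0

/-- Expectation of `φ(x,y)` under the `F₂` density. -/
noncomputable def f2E (a b : ℝ) (φ : ℝ → ℝ → ℝ) : ℝ :=
  ∫ x in Set.Ioi (0:ℝ), ∫ y in Set.Ioi (0:ℝ), φ x y * freundF2 a b x y

/-- Covariance of `X` and `Y` under the `F₂` density. -/
noncomputable def f2Cov (a b : ℝ) : ℝ :=
  f2E a b (fun x y => x * y) - f2E a b (fun x _ => x) * f2E a b (fun _ y => y)

open Set Filter

lemma tends0 (n : ℕ) {k : ℝ} (hk : 0 < k) :
    Tendsto (fun y : ℝ => y ^ n * Real.exp (-(k * y))) atTop (nhds 0) := by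
  have h := ((tendsto_pow_mul_exp_neg_atTop_nhds_zero n).comp
      (tendsto_id.const_mul_atTop hk)).const_mul ((1:ℝ)/k^n)
  rw [mul_zero] at h
  refine h.congr (fun y => ?_)
  simp only [Function.comp, id]
  rw [mul_pow]
  field_simp

lemma poly_tends0 {k : ℝ} (hk : 0 < k) (c0 c1 c2 c3 : ℝ) :
    Tendsto (fun y : ℝ => (c0 + c1*y + c2*y^2 + c3*y^3) * Real.exp (-(k * y))) atTop (nhds 0) := by
  have h := (((((tends0 0 hk).const_mul c0).add ((tends0 1 hk).const_mul c1)).add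
    ((tends0 2 hk).const_mul c2)).add ((tends0 3 hk).const_mul c3))
  simp only [mul_zero, add_zero] at h
  refine h.congr (fun y => ?_)
  ring

lemma E0 {k : ℝ} (hk : 0 < k) (s : ℝ) :
    ∫ y in Ioi s, Real.exp (-(k * y)) = Real.exp (-(k * s)) / k := by
  have := integral_Ioi_of_hasDerivAt_of_nonneg' (a := s)
    (g := fun y => -(Real.exp (-(k*y)) / k)) (g' := fun y => Real.exp (-(k*y))) (l := 0)
    (fun y _ => by
      have : HasDerivAt (fun y : ℝ => -(k*y)) (-k) y := by
        exact ((hasDerivAt_id' y).const_mul k).neg.congr_deriv (by ring)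
      have h2 := ((this.exp).div_const k).neg
      refine h2.congr_deriv ?_
      field_simp)
    (fun y _ => (Real.exp_pos _).le)
    (by
      have := ((tends0 0 hk).div_const k).neg
      simp only [pow_zero, one_mul, zero_div, neg_zero] at this
      exact this)
  simpa using this

lemma I0 {k : ℝ} (hk : 0 < k) (s : ℝ) :
    IntegrableOn (fun y => Real.exp (-(k * y))) (Ioi s) := by
  have := exp_neg_integrableOn_Ioi s hk
  simpa [neg_mul] using this

lemma genE {k : ℝ} (hk : 0 < k) (p0 p1 p2 p3 : ℝ) {s : ℝ} (hs : 0 ≤ s) (n : ℕ)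
    (hP : ∀ y : ℝ, k*(p0+p1*y+p2*y^2+p3*y^3) - (p1+2*p2*y+3*p3*y^2) = y^n) :
    (∫ y in Ioi s, y^n * Real.exp (-(k*y))
        = (p0+p1*s+p2*s^2+p3*s^3) * Real.exp (-(k*s))) ∧
      IntegrableOn (fun y => y^n * Real.exp (-(k*y))) (Ioi s) := by
  set G : ℝ → ℝ := fun y => -((p0+p1*y+p2*y^2+p3*y^3) * Real.exp (-(k*y))) with hG
  have hderiv : ∀ y ∈ Ici s, HasDerivAt G (y^n * Real.exp (-(k*y))) y := by
    intro y _
    have h1 : HasDerivAt (fun y : ℝ => p0+p1*y+p2*y^2+p3*y^3)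
        (0 + p1*1 + p2*(2*y^1) + p3*(3*y^2)) y := by
      exact (((hasDerivAt_const y p0).add ((hasDerivAt_id y).const_mul p1)).add
        ((hasDerivAt_pow 2 y).const_mul p2)).add ((hasDerivAt_pow 3 y).const_mul p3)
    have h2 : HasDerivAt (fun y : ℝ => Real.exp (-(k*y))) (-k * Real.exp (-(k*y))) y := by
      have : HasDerivAt (fun y : ℝ => -(k*y)) (-k) y := by
        exact ((hasDerivAt_id' y).const_mul k).neg.congr_deriv (by ring)
      simpa [mul_comm] using this.exp
    have h3 := (h1.mul h2).neg
    refine h3.congr_deriv ?_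
    have := hP y
    nlinarith [Real.exp_pos (-(k*y)), this]
  have hpos : ∀ y ∈ Ioi s, 0 ≤ y^n * Real.exp (-(k*y)) := fun y hy =>
    mul_nonneg (pow_nonneg (le_trans hs (le_of_lt hy)) n) (Real.exp_pos _).le
  have htend : Tendsto G atTop (nhds 0) := by
    have := (poly_tends0 hk p0 p1 p2 p3).neg
    simpa using this
  constructor
  · have := integral_Ioi_of_hasDerivAt_of_nonneg' hderiv hpos htend
    simpa [hG] using this
  · exact integrableOn_Ioi_deriv_of_nonneg' hderiv hpos htend

lemma E1 {k : ℝ} (hk : 0 < k) {s : ℝ} (hs : 0 ≤ s) :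
    ∫ y in Ioi s, y * Real.exp (-(k*y)) = (1/k^2 + s/k) * Real.exp (-(k*s)) := by
  have := (genE hk (1/k^2) (1/k) 0 0 hs 1 (fun y => by field_simp; ring)).1
  simp only [pow_one] at this
  rw [this]; ring

lemma I1 {k : ℝ} (hk : 0 < k) {s : ℝ} (hs : 0 ≤ s) :
    IntegrableOn (fun y => y * Real.exp (-(k*y))) (Ioi s) := by
  have := (genE hk (1/k^2) (1/k) 0 0 hs 1 (fun y => by field_simp; ring)).2
  simpa using this

lemma E2 {k : ℝ} (hk : 0 < k) {s : ℝ} (hs : 0 ≤ s) :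
    ∫ y in Ioi s, y^2 * Real.exp (-(k*y)) = (2/k^3 + 2*s/k^2 + s^2/k) * Real.exp (-(k*s)) := by
  have := (genE hk (2/k^3) (2/k^2) (1/k) 0 hs 2 (fun y => by field_simp; ring)).1
  rw [this]; ring

lemma I2 {k : ℝ} (hk : 0 < k) {s : ℝ} (hs : 0 ≤ s) :
    IntegrableOn (fun y => y^2 * Real.exp (-(k*y))) (Ioi s) :=
  (genE hk (2/k^3) (2/k^2) (1/k) 0 hs 2 (fun y => by field_simp; ring)).2

lemma E3 {k : ℝ} (hk : 0 < k) {s : ℝ} (hs : 0 ≤ s) :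
    ∫ y in Ioi s, y^3 * Real.exp (-(k*y))
      = (6/k^4 + 6*s/k^3 + 3*s^2/k^2 + s^3/k) * Real.exp (-(k*s)) := by
  have := (genE hk (6/k^4) (6/k^3) (3/k^2) (1/k) hs 3 (fun y => by field_simp; ring)).1
  rw [this]; ring

lemma I3 {k : ℝ} (hk : 0 < k) {s : ℝ} (hs : 0 ≤ s) :
    IntegrableOn (fun y => y^3 * Real.exp (-(k*y))) (Ioi s) :=
  (genE hk (6/k^4) (6/k^3) (3/k^2) (1/k) hs 3 (fun y => by field_simp; ring)).2

/-! Interval integrals on `Ioc 0 x`. -/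

lemma F0 {c : ℝ} (hc : c ≠ 0) {x : ℝ} (hx : 0 ≤ x) :
    ∫ y in Ioc (0:ℝ) x, Real.exp (-(c*y)) = (1 - Real.exp (-(c*x)))/c := by
  rw [← intervalIntegral.integral_of_le hx]
  have := intervalIntegral.integral_eq_sub_of_hasDerivAt (a := 0) (b := x)
    (f := fun y => -(Real.exp (-(c*y))/c)) (f' := fun y => Real.exp (-(c*y)))
    (fun t _ => by
      have h1 : HasDerivAt (fun y : ℝ => -(c*y)) (-c) t := by
        exact ((hasDerivAt_id' t).const_mul c).neg.congr_deriv (by ring)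
      have h2 := ((h1.exp).div_const c).neg
      refine h2.congr_deriv ?_
      field_simp)
    (by apply Continuous.intervalIntegrable; continuity)
  rw [this]
  simp [Real.exp_zero]
  field_simp
  ring

lemma F1 {c : ℝ} (hc : c ≠ 0) {x : ℝ} (hx : 0 ≤ x) :
    ∫ y in Ioc (0:ℝ) x, y * Real.exp (-(c*y))
      = 1/c^2 - (1/c^2 + x/c) * Real.exp (-(c*x)) := by
  rw [← intervalIntegral.integral_of_le hx]
  have := intervalIntegral.integral_eq_sub_of_hasDerivAt (a := 0) (b := x)
    (f := fun y => -((1/c^2 + y/c) * Real.exp (-(c*y))))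
    (f' := fun y => y * Real.exp (-(c*y)))
    (fun t _ => by
      have h1 : HasDerivAt (fun y : ℝ => 1/c^2 + y/c) (1/c) t := by
        have h0 := ((hasDerivAt_id t).div_const c).const_add (1/c^2)
        simp only [id] at h0
        convert h0 using 1
      have hexp : HasDerivAt (fun y : ℝ => Real.exp (-(c*y))) (-c * Real.exp (-(c*t))) t := by
        have : HasDerivAt (fun y : ℝ => -(c*y)) (-c) t := by
          exact ((hasDerivAt_id' t).const_mul c).neg.congr_deriv (by ring)
        simpa [mul_comm] using this.exp
      have h3 := (h1.mul hexp).neg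
      refine h3.congr_deriv ?_
      have h4 := Real.exp_pos (-(c*t))
      field_simp
      ring)
    (by apply Continuous.intervalIntegrable; continuity)
  rw [this]
  simp [Real.exp_zero]
  ring

lemma Fc0 {x : ℝ} (hx : 0 ≤ x) : ∫ y in Ioc (0:ℝ) x, (1:ℝ) = x := by
  simp [Real.volume_Ioc, hx]

lemma Fc1 {x : ℝ} (hx : 0 ≤ x) : ∫ y in Ioc (0:ℝ) x, y = x^2/2 := by
  rw [← intervalIntegral.integral_of_le hx]
  simp [integral_id]

/-! Splitting the inner integral. -/

lemma inner_split (a b x : ℝ) (hx : 0 < x) (φ : ℝ → ℝ) (hφ : Continuous φ)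
    (hint : IntegrableOn (fun y => φ y * (a * b * Real.exp (-b * y - (2*a-b) * x))) (Ioi x)) :
    ∫ y in Ioi (0:ℝ), φ y * freundF2 a b x y
      = (∫ y in Ioc (0:ℝ) x, φ y * (a * b * Real.exp (-b * x - (2*a-b) * y)))
        + ∫ y in Ioi x, φ y * (a * b * Real.exp (-b * y - (2*a-b) * x)) := by
  set g : ℝ → ℝ := fun y => φ y * freundF2 a b x y with hgdef
  set r2 : ℝ → ℝ := fun y => φ y * (a * b * Real.exp (-b * x - (2*a-b) * y)) with hr2
  set r1 : ℝ → ℝ := fun y => φ y * (a * b * Real.exp (-b * y - (2*a-b) * x)) with hr1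
  have haex : ∀ᵐ y : ℝ, y ≠ x := by
    have : (volume : Measure ℝ) {y : ℝ | ¬ y ≠ x} = 0 := by
      have : {y : ℝ | ¬ y ≠ x} = {x} := by ext y; simp
      rw [this]; exact volume_singleton
    exact ae_iff.mpr this
  have hae2 : g =ᵐ[volume.restrict (Ioc (0:ℝ) x)] r2 := by
    filter_upwards [ae_restrict_mem measurableSet_Ioc, ae_restrict_of_ae haex] with y hy hne
    have hylt : y < x := lt_of_le_of_ne hy.2 hne
    simp only [hgdef, hr2, freundF2]
    rw [if_neg (fun h => lt_asymm hylt h.2), if_pos ⟨hy.1, hylt⟩]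
  have heq1 : EqOn g r1 (Ioi x) := by
    intro y hy
    simp only [hgdef, hr1, freundF2]
    rw [if_pos ⟨hx, hy⟩]
  have hint2 : IntegrableOn g (Ioc (0:ℝ) x) := by
    have : IntegrableOn r2 (Ioc (0:ℝ) x) := by
      apply Continuous.integrableOn_Ioc
      continuity
    exact this.congr hae2.symm
  have hint1 : IntegrableOn g (Ioi x) := by
    exact hint.congr (EventuallyEq.symm (ae_restrict_of_forall_mem measurableSet_Ioi heq1))
  calc ∫ y in Ioi (0:ℝ), g y = ∫ y in Ioc (0:ℝ) x ∪ Ioi x, g y := by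
        rw [Ioc_union_Ioi_eq_Ioi hx.le]
    _ = (∫ y in Ioc (0:ℝ) x, g y) + ∫ y in Ioi x, g y :=
        setIntegral_union Ioc_disjoint_Ioi_same measurableSet_Ioi hint2 hint1
    _ = (∫ y in Ioc (0:ℝ) x, r2 y) + ∫ y in Ioi x, r1 y := by
        rw [integral_congr_ae hae2, setIntegral_congr_fun measurableSet_Ioi heq1]

/-! Exponent splitting helpers. -/

lemma hsplit1 (a b x y : ℝ) :
    a*b*Real.exp (-b*y - (2*a-b)*x) = (a*b*Real.exp (-((2*a-b)*x))) * Real.exp (-(b*y)) := by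
  rw [show -b*y - (2*a-b)*x = -((2*a-b)*x) + -(b*y) by ring, Real.exp_add]
  ring

lemma hsplit2 (a b x y : ℝ) :
    a*b*Real.exp (-b*x - (2*a-b)*y) = (a*b*Real.exp (-(b*x))) * Real.exp (-((2*a-b)*y)) := by
  rw [show -b*x - (2*a-b)*y = -(b*x) + -((2*a-b)*y) by ring, Real.exp_add]
  ring

lemma hXZ (a b x : ℝ) :
    Real.exp (-(b*x)) * Real.exp (-((2*a-b)*x)) = Real.exp (-(2*a*x)) := by
  rw [← Real.exp_add]
  congr 1
  ring

lemma E0z {k : ℝ} (hk : 0 < k) : ∫ y in Ioi (0:ℝ), Real.exp (-(k*y)) = 1/k := by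
  rw [E0 hk 0]; simp

lemma E1z {k : ℝ} (hk : 0 < k) : ∫ y in Ioi (0:ℝ), y * Real.exp (-(k*y)) = 1/k^2 := by
  rw [E1 hk le_rfl]; simp

lemma E2z {k : ℝ} (hk : 0 < k) : ∫ y in Ioi (0:ℝ), y^2 * Real.exp (-(k*y)) = 2/k^3 := by
  rw [E2 hk le_rfl]; simp

lemma E3z {k : ℝ} (hk : 0 < k) : ∫ y in Ioi (0:ℝ), y^3 * Real.exp (-(k*y)) = 6/k^4 := by
  rw [E3 hk le_rfl]; simp

lemma f2E_x (a b : ℝ) (ha : 0 < a) (hb : 0 < b) :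
    f2E a b (fun x _ => x) = 1/(2*a) + 1/(2*b) := by
  have h2a : 0 < 2*a := by linarith
  have inner : ∀ x ∈ Ioi (0:ℝ),
      (∫ y in Ioi (0:ℝ), x * freundF2 a b x y)
        = (a*b*Real.exp (-(b*x)) * x) * (∫ y in Ioc (0:ℝ) x, Real.exp (-((2*a-b)*y)))
          + a * (x * Real.exp (-(2*a*x))) := by
    intro x hx
    have hint : IntegrableOn (fun y => x * (a * b * Real.exp (-b * y - (2*a-b) * x))) (Ioi x) := by
      have he : (fun y => x * (a*b*Real.exp (-b*y-(2*a-b)*x)))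
          = fun y => (x*(a*b*Real.exp (-((2*a-b)*x)))) * Real.exp (-(b*y)) :=
        funext fun y => by rw [hsplit1]; ring
      rw [he]; exact (I0 hb x).const_mul _
    rw [inner_split a b x hx (fun _ => x) continuous_const hint]
    congr 1
    · have he : (fun y => x * (a*b*Real.exp (-b*x-(2*a-b)*y)))
          = fun y => (a*b*Real.exp (-(b*x)) * x) * Real.exp (-((2*a-b)*y)) :=
        funext fun y => by rw [hsplit2]; ring
      rw [he, integral_const_mul]
    · have he : (fun y => x * (a*b*Real.exp (-b*y-(2*a-b)*x)))
          = fun y => (x*(a*b*Real.exp (-((2*a-b)*x)))) * Real.exp (-(b*y)) :=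
        funext fun y => by rw [hsplit1]; ring
      rw [he, integral_const_mul, E0 hb x, ← hXZ a b x]
      field_simp
  simp only [f2E]
  rw [setIntegral_congr_fun measurableSet_Ioi inner]
  rcases eq_or_ne (2*a - b) 0 with hc | hc
  · have hb2 : b = 2*a := by linarith
    have key : ∀ x ∈ Ioi (0:ℝ),
        (a*b*Real.exp (-(b*x)) * x) * (∫ y in Ioc (0:ℝ) x, Real.exp (-((2*a-b)*y)))
          + a * (x * Real.exp (-(2*a*x)))
        = a*b*(x^2 * Real.exp (-(b*x))) + a*(x * Real.exp (-(b*x))) := by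
      intro x hx
      have : (∫ y in Ioc (0:ℝ) x, Real.exp (-((2*a-b)*y))) = x := by
        rw [hc]
        simpa using Fc0 (le_of_lt hx)
      rw [this, hb2]
      ring
    rw [setIntegral_congr_fun measurableSet_Ioi key,
      integral_add ((I2 hb le_rfl).const_mul _) ((I1 hb le_rfl).const_mul _),
      integral_const_mul, integral_const_mul, E2z hb, E1z hb, hb2]
    field_simp
  · have key : ∀ x ∈ Ioi (0:ℝ),
        (a*b*Real.exp (-(b*x)) * x) * (∫ y in Ioc (0:ℝ) x, Real.exp (-((2*a-b)*y)))
          + a * (x * Real.exp (-(2*a*x)))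
        = (a*b/(2*a-b))*(x * Real.exp (-(b*x)))
          + (a - a*b/(2*a-b))*(x * Real.exp (-(2*a*x))) := by
      intro x hx
      rw [F0 hc (le_of_lt hx), ← hXZ a b x]
      field_simp
      ring
    rw [setIntegral_congr_fun measurableSet_Ioi key,
      integral_add ((I1 hb le_rfl).const_mul _) ((I1 h2a le_rfl).const_mul _),
      integral_const_mul, integral_const_mul, E1z hb, E1z h2a]
    have hc2 : a*2 - b ≠ 0 := fun h => hc (by linarith)
    field_simp
    ring

lemma f2E_y (a b : ℝ) (ha : 0 < a) (hb : 0 < b) :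
    f2E a b (fun _ y => y) = 1/(2*a) + 1/(2*b) := by
  have h2a : 0 < 2*a := by linarith
  have inner : ∀ x ∈ Ioi (0:ℝ),
      (∫ y in Ioi (0:ℝ), y * freundF2 a b x y)
        = (a*b*Real.exp (-(b*x))) * (∫ y in Ioc (0:ℝ) x, y * Real.exp (-((2*a-b)*y)))
          + (a*b*Real.exp (-((2*a-b)*x))) * ((1/b^2 + x/b) * Real.exp (-(b*x))) := by
    intro x hx
    have hint : IntegrableOn (fun y => y * (a * b * Real.exp (-b * y - (2*a-b) * x))) (Ioi x) := by
      have he : (fun y => y * (a*b*Real.exp (-b*y-(2*a-b)*x)))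
          = fun y => (a*b*Real.exp (-((2*a-b)*x))) * (y * Real.exp (-(b*y))) :=
        funext fun y => by rw [hsplit1]; ring
      rw [he]; exact (I1 hb (le_of_lt hx)).const_mul _
    rw [inner_split a b x hx (fun y => y) continuous_id hint]
    congr 1
    · have he : (fun y => y * (a*b*Real.exp (-b*x-(2*a-b)*y)))
          = fun y => (a*b*Real.exp (-(b*x))) * (y * Real.exp (-((2*a-b)*y))) :=
        funext fun y => by rw [hsplit2]; ring
      rw [he, integral_const_mul]
    · have he : (fun y => y * (a*b*Real.exp (-b*y-(2*a-b)*x)))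
          = fun y => (a*b*Real.exp (-((2*a-b)*x))) * (y * Real.exp (-(b*y))) :=
        funext fun y => by rw [hsplit1]; ring
      rw [he, integral_const_mul, E1 hb (le_of_lt hx)]
  simp only [f2E]
  rw [setIntegral_congr_fun measurableSet_Ioi inner]
  rcases eq_or_ne (2*a - b) 0 with hc | hc
  · have hb2 : b = 2*a := by linarith
    have key : ∀ x ∈ Ioi (0:ℝ),
        (a*b*Real.exp (-(b*x))) * (∫ y in Ioc (0:ℝ) x, y * Real.exp (-((2*a-b)*y)))
          + (a*b*Real.exp (-((2*a-b)*x))) * ((1/b^2 + x/b) * Real.exp (-(b*x)))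
        = (a*b/2)*(x^2 * Real.exp (-(b*x))) + a*(x * Real.exp (-(b*x)))
          + (a/b)*Real.exp (-(b*x)) := by
      intro x hx
      have hIoc : (∫ y in Ioc (0:ℝ) x, y * Real.exp (-((2*a-b)*y))) = x^2/2 := by
        rw [hc]; simpa using Fc1 (le_of_lt hx)
      rw [hIoc, hc]
      simp only [zero_mul, neg_zero, Real.exp_zero]
      field_simp
      ring
    rw [setIntegral_congr_fun measurableSet_Ioi key]
    have i1 : Integrable (fun x : ℝ => a*b/2*(x^2 * Real.exp (-(b*x)))) (volume.restrict (Ioi (0:ℝ))) := (I2 hb le_rfl).const_mul _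
    have i2 : Integrable (fun x : ℝ => a*(x * Real.exp (-(b*x)))) (volume.restrict (Ioi (0:ℝ))) := (I1 hb le_rfl).const_mul _
    have i3 : Integrable (fun x : ℝ => a/b*Real.exp (-(b*x))) (volume.restrict (Ioi (0:ℝ))) := (I0 hb 0).const_mul _
    have i12 : Integrable (fun x : ℝ => a*b/2*(x^2 * Real.exp (-(b*x))) + a*(x * Real.exp (-(b*x)))) (volume.restrict (Ioi (0:ℝ))) := i1.add i2
    rw [integral_add i12 i3, integral_add i1 i2,
      integral_const_mul, integral_const_mul, integral_const_mul, E2z hb, E1z hb, E0z hb, hb2]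
    field_simp
    ring
  · have key : ∀ x ∈ Ioi (0:ℝ),
        (a*b*Real.exp (-(b*x))) * (∫ y in Ioc (0:ℝ) x, y * Real.exp (-((2*a-b)*y)))
          + (a*b*Real.exp (-((2*a-b)*x))) * ((1/b^2 + x/b) * Real.exp (-(b*x)))
        = (a*b/(2*a-b)^2)*Real.exp (-(b*x)) + (a/b - a*b/(2*a-b)^2)*Real.exp (-(2*a*x))
          + (a - a*b/(2*a-b))*(x * Real.exp (-(2*a*x))) := by
      intro x hx
      rw [F1 hc (le_of_lt hx), ← hXZ a b x]
      have hc2 : a*2 - b ≠ 0 := fun h => hc (by linarith)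
      field_simp
      ring
    rw [setIntegral_congr_fun measurableSet_Ioi key]
    have i1 : Integrable (fun x : ℝ => a*b/(2*a-b)^2*Real.exp (-(b*x))) (volume.restrict (Ioi (0:ℝ))) := (I0 hb 0).const_mul _
    have i2 : Integrable (fun x : ℝ => (a/b - a*b/(2*a-b)^2)*Real.exp (-(2*a*x))) (volume.restrict (Ioi (0:ℝ))) := (I0 h2a 0).const_mul _
    have i3 : Integrable (fun x : ℝ => (a - a*b/(2*a-b))*(x * Real.exp (-(2*a*x)))) (volume.restrict (Ioi (0:ℝ))) := (I1 h2a le_rfl).const_mul _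
    have i12 : Integrable (fun x : ℝ => a*b/(2*a-b)^2*Real.exp (-(b*x)) + (a/b - a*b/(2*a-b)^2)*Real.exp (-(2*a*x))) (volume.restrict (Ioi (0:ℝ))) := i1.add i2
    rw [integral_add i12 i3, integral_add i1 i2,
      integral_const_mul, integral_const_mul, integral_const_mul, E0z hb, E0z h2a, E1z h2a]
    have hc2 : a*2 - b ≠ 0 := fun h => hc (by linarith)
    field_simp
    ring

lemma f2E_xy (a b : ℝ) (ha : 0 < a) (hb : 0 < b) :
    f2E a b (fun x y => x * y) = 1/(2*a^2) + 1/(2*a*b) := by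
  have h2a : 0 < 2*a := by linarith
  have inner : ∀ x ∈ Ioi (0:ℝ),
      (∫ y in Ioi (0:ℝ), x * y * freundF2 a b x y)
        = (a*b*Real.exp (-(b*x)) * x) * (∫ y in Ioc (0:ℝ) x, y * Real.exp (-((2*a-b)*y)))
          + (a*b*Real.exp (-((2*a-b)*x)) * x) * ((1/b^2 + x/b) * Real.exp (-(b*x))) := by
    intro x hx
    have hint : IntegrableOn (fun y => x * y * (a * b * Real.exp (-b * y - (2*a-b) * x)))
        (Ioi x) := by
      have he : (fun y => x * y * (a*b*Real.exp (-b*y-(2*a-b)*x)))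
          = fun y => (a*b*Real.exp (-((2*a-b)*x)) * x) * (y * Real.exp (-(b*y))) :=
        funext fun y => by rw [hsplit1]; ring
      rw [he]; exact (I1 hb (le_of_lt hx)).const_mul _
    rw [inner_split a b x hx (fun y => x * y) (continuous_const.mul continuous_id) hint]
    congr 1
    · have he : (fun y => x * y * (a*b*Real.exp (-b*x-(2*a-b)*y)))
          = fun y => (a*b*Real.exp (-(b*x)) * x) * (y * Real.exp (-((2*a-b)*y))) :=
        funext fun y => by rw [hsplit2]; ring
      rw [he, integral_const_mul]
    · have he : (fun y => x * y * (a*b*Real.exp (-b*y-(2*a-b)*x)))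
          = fun y => (a*b*Real.exp (-((2*a-b)*x)) * x) * (y * Real.exp (-(b*y))) :=
        funext fun y => by rw [hsplit1]; ring
      rw [he, integral_const_mul, E1 hb (le_of_lt hx)]
  simp only [f2E]
  rw [setIntegral_congr_fun measurableSet_Ioi inner]
  rcases eq_or_ne (2*a - b) 0 with hc | hc
  · have hb2 : b = 2*a := by linarith
    have key : ∀ x ∈ Ioi (0:ℝ),
        (a*b*Real.exp (-(b*x)) * x) * (∫ y in Ioc (0:ℝ) x, y * Real.exp (-((2*a-b)*y)))
          + (a*b*Real.exp (-((2*a-b)*x)) * x) * ((1/b^2 + x/b) * Real.exp (-(b*x)))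
        = (a*b/2)*(x^3 * Real.exp (-(b*x))) + a*(x^2 * Real.exp (-(b*x)))
          + (a/b)*(x * Real.exp (-(b*x))) := by
      intro x hx
      have hIoc : (∫ y in Ioc (0:ℝ) x, y * Real.exp (-((2*a-b)*y))) = x^2/2 := by
        rw [hc]; simpa using Fc1 (le_of_lt hx)
      rw [hIoc, hc]
      simp only [zero_mul, neg_zero, Real.exp_zero]
      field_simp
      ring
    rw [setIntegral_congr_fun measurableSet_Ioi key]
    have i1 : Integrable (fun x : ℝ => a*b/2*(x^3 * Real.exp (-(b*x)))) (volume.restrict (Ioi (0:ℝ))) := (I3 hb le_rfl).const_mul _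
    have i2 : Integrable (fun x : ℝ => a*(x^2 * Real.exp (-(b*x)))) (volume.restrict (Ioi (0:ℝ))) := (I2 hb le_rfl).const_mul _
    have i3 : Integrable (fun x : ℝ => a/b*(x * Real.exp (-(b*x)))) (volume.restrict (Ioi (0:ℝ))) := (I1 hb le_rfl).const_mul _
    have i12 : Integrable (fun x : ℝ => a*b/2*(x^3 * Real.exp (-(b*x))) + a*(x^2 * Real.exp (-(b*x)))) (volume.restrict (Ioi (0:ℝ))) := i1.add i2
    rw [integral_add i12 i3, integral_add i1 i2,
      integral_const_mul, integral_const_mul, integral_const_mul, E3z hb, E2z hb, E1z hb, hb2]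
    field_simp
    ring
  · have key : ∀ x ∈ Ioi (0:ℝ),
        (a*b*Real.exp (-(b*x)) * x) * (∫ y in Ioc (0:ℝ) x, y * Real.exp (-((2*a-b)*y)))
          + (a*b*Real.exp (-((2*a-b)*x)) * x) * ((1/b^2 + x/b) * Real.exp (-(b*x)))
        = (a*b/(2*a-b)^2)*(x * Real.exp (-(b*x)))
          + (a/b - a*b/(2*a-b)^2)*(x * Real.exp (-(2*a*x)))
          + (a - a*b/(2*a-b))*(x^2 * Real.exp (-(2*a*x))) := by
      intro x hx
      rw [F1 hc (le_of_lt hx), ← hXZ a b x]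
      have hc2 : a*2 - b ≠ 0 := fun h => hc (by linarith)
      field_simp
      ring
    rw [setIntegral_congr_fun measurableSet_Ioi key]
    have i1 : Integrable (fun x : ℝ => a*b/(2*a-b)^2*(x * Real.exp (-(b*x)))) (volume.restrict (Ioi (0:ℝ))) := (I1 hb le_rfl).const_mul _
    have i2 : Integrable (fun x : ℝ => (a/b - a*b/(2*a-b)^2)*(x * Real.exp (-(2*a*x)))) (volume.restrict (Ioi (0:ℝ))) := (I1 h2a le_rfl).const_mul _
    have i3 : Integrable (fun x : ℝ => (a - a*b/(2*a-b))*(x^2 * Real.exp (-(2*a*x)))) (volume.restrict (Ioi (0:ℝ))) := (I2 h2a le_rfl).const_mul _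
    have i12 : Integrable (fun x : ℝ => a*b/(2*a-b)^2*(x * Real.exp (-(b*x))) + (a/b - a*b/(2*a-b)^2)*(x * Real.exp (-(2*a*x)))) (volume.restrict (Ioi (0:ℝ))) := i1.add i2
    rw [integral_add i12 i3, integral_add i1 i2,
      integral_const_mul, integral_const_mul, integral_const_mul, E1z hb, E1z h2a, E2z h2a]
    have hc2 : a*2 - b ≠ 0 := fun h => hc (by linarith)
    field_simp
    ring

theorem freundF2_covariance (a b : ℝ) (ha : 0 < a) (hb : 0 < b) :
    f2Cov a b = (1 / 4) * (1 / a ^ 2 - 1 / b ^ 2) ∧ (f2Cov a b = 0 ↔ a = b) := by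
  have hcov : f2Cov a b = (1 / 4) * (1 / a ^ 2 - 1 / b ^ 2) := by
    rw [f2Cov, f2E_xy a b ha hb, f2E_x a b ha hb, f2E_y a b ha hb]
    field_simp
    ring
  refine ⟨hcov, ?_⟩
  rw [hcov]
  constructor
  · intro h
    have h2 : a^2 = b^2 := by
      field_simp at h
      linarith
    have h3 : (a - b) * (a + b) = 0 := by linear_combination h2
    rcases mul_eq_zero.mp h3 with h4 | h4
    · linarith
    · linarith
  · intro h
    rw [h]
    ring
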